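/- For all n ≥ 0, the number of (2,5)-regular partitions of 4n+2 into distinct parts is even, i.e., a_{2,5}(4n+2) ≡ 0 (mod 2). -/

import Mathlib

/-- Number of (r,s)-regular partitions of n into distinct parts: partitions of n
with pairwise distinct parts, none of which is divisible by r or by s. -/
noncomputable def ars (r s n : ℕ) : ℕ :=
  Nat.card {p : n.Partition // p.parts.Nodup ∧ ∀ x ∈ p.parts, ¬ r ∣ x ∧ ¬ s ∣ x}

open Finset

namespace A25

def enn (q : Finset ℕ × Finset ℕ) : ℤ := ((∑ x ∈ q.1, x : ℕ) : ℤ) + ((∑ x ∈ q.2, x : ℕ) : ℤ)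
def chg (q : Finset ℕ × Finset ℕ) : ℤ := (q.1.card : ℤ) - (q.2.card : ℤ)

def Cond (k W : ℤ) (q : Finset ℕ × Finset ℕ) : Prop := 0 ∉ q.2 ∧ chg q = k ∧ enn q = W

instance (k W : ℤ) (q : Finset ℕ × Finset ℕ) : Decidable (Cond k W q) := by
  unfold Cond; infer_instance

def CF (k W : ℤ) : Finset (Finset ℕ × Finset ℕ) :=
  ((range (W.toNat+1)).powerset ×ˢ (range (W.toNat+1)).powerset).filter (Cond k W)

lemma elem_le_sum {s : Finset ℕ} {x : ℕ} (hx : x ∈ s) : x ≤ ∑ y ∈ s, y :=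
  Finset.single_le_sum (f := fun y => y) (fun _ _ => Nat.zero_le _) hx

lemma mem_CF {k W : ℤ} {q : Finset ℕ × Finset ℕ} : q ∈ CF k W ↔ Cond k W q := by
  unfold CF
  rw [Finset.mem_filter, Finset.mem_product, Finset.mem_powerset, Finset.mem_powerset]
  constructor
  · exact fun h => h.2
  · intro h
    have h2 : ((∑ x ∈ q.1, x : ℕ) : ℤ) + ((∑ x ∈ q.2, x : ℕ) : ℤ) = W := h.2.2
    refine ⟨⟨?_, ?_⟩, h⟩ <;> intro x hx <;> rw [Finset.mem_range] <;>
      have h1 := elem_le_sum hx <;> omega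

-- helpers about images under (·+1) and (·-1)

lemma card_image_add (s : Finset ℕ) : (s.image (· + 1)).card = s.card :=
  Finset.card_image_of_injective s (fun a b h => by omega)

lemma sum_image_add (s : Finset ℕ) : ∑ x ∈ s.image (· + 1), x = (∑ x ∈ s, x) + s.card := by
  rw [Finset.sum_image (fun x _ y _ h => by omega)]
  simp [Finset.sum_add_distrib]

lemma card_image_sub (s : Finset ℕ) (h : 0 ∉ s) : (s.image (· - 1)).card = s.card := by
  apply Finset.card_image_of_injOn
  intro x hx y hy hxy
  have hx0 : x ≠ 0 := fun e => h (e ▸ hx)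
  have hy0 : y ≠ 0 := fun e => h (e ▸ hy)
  have hxy' : x - 1 = y - 1 := hxy
  omega

lemma sum_image_sub (s : Finset ℕ) (h : 0 ∉ s) :
    (∑ x ∈ s.image (· - 1), x) + s.card = ∑ x ∈ s, x := by
  rw [Finset.sum_image (fun x hx y hy hxy => by
    have hx0 : x ≠ 0 := fun e => h (e ▸ hx)
    have hy0 : y ≠ 0 := fun e => h (e ▸ hy)
    have hxy' : x - 1 = y - 1 := hxy
    omega)]
  have h1 : ∑ x ∈ s, (x - 1) + ∑ _x ∈ s, 1 = ∑ x ∈ s, (x - 1 + 1) :=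
    (Finset.sum_add_distrib).symm
  have h2 : ∑ x ∈ s, (x - 1 + 1) = ∑ x ∈ s, x := by
    apply Finset.sum_congr rfl
    intro x hx
    have hx0 : x ≠ 0 := fun e => h (e ▸ hx)
    omega
  simp only [Finset.sum_const, smul_eq_mul, mul_one] at h1
  omega

lemma image_add_sub (s : Finset ℕ) : ((s.image (· + 1)).image (· - 1)) = s := by
  rw [Finset.image_image]
  have : ((· - 1) ∘ (· + 1) : ℕ → ℕ) = id := by funext x; simp
  rw [this, Finset.image_id]

lemma image_sub_add (s : Finset ℕ) (h : 0 ∉ s) : ((s.image (· - 1)).image (· + 1)) = s := by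
  rw [Finset.image_image]
  rw [Finset.image_congr (g := id) (fun x hx => by
    have hx0 : x ≠ 0 := fun e => h (e ▸ hx)
    simp; omega)]
  exact Finset.image_id

lemma zero_not_mem_image_add (s : Finset ℕ) : 0 ∉ s.image (· + 1) := by
  simp

def U (q : Finset ℕ × Finset ℕ) : Finset ℕ × Finset ℕ :=
  if 1 ∈ q.2 then (q.1.image (· + 1), (q.2.erase 1).image (· - 1))
  else (insert 0 (q.1.image (· + 1)), q.2.image (· - 1))

def Dn (q : Finset ℕ × Finset ℕ) : Finset ℕ × Finset ℕ :=
  if 0 ∈ q.1 then ((q.1.erase 0).image (· - 1), q.2.image (· + 1))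
  else (q.1.image (· - 1), insert 1 (q.2.image (· + 1)))

lemma U_cond {k W : ℤ} {q : Finset ℕ × Finset ℕ} (h : Cond k W q) :
    Cond (k+1) (W+k) (U q) := by
  obtain ⟨h0, hc, he⟩ := h
  simp only [chg, enn] at hc he
  by_cases h1 : 1 ∈ q.2
  · have hY0 : 0 ∉ q.2.erase 1 := fun hmem => h0 (Finset.mem_of_mem_erase hmem)
    have hce : (q.2.erase 1).card = q.2.card - 1 := Finset.card_erase_of_mem h1
    have hse : (∑ x ∈ q.2.erase 1, x) + 1 = ∑ x ∈ q.2, x := by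
      have := Finset.sum_erase_add q.2 (fun x => x) h1
      simpa using this
    have hcY : ((q.2.erase 1).image (· - 1)).card = (q.2.erase 1).card :=
      card_image_sub _ hY0
    have hsY := sum_image_sub _ hY0
    have hcX := card_image_add q.1
    have hsX := sum_image_add q.1
    have hcard1 : 1 ≤ q.2.card := Finset.card_pos.mpr ⟨1, h1⟩
    refine ⟨?_, ?_, ?_⟩
    · simp only [U, h1, if_true]
      intro hmem
      obtain ⟨y, hy, hy0⟩ := Finset.mem_image.mp hmem
      have : y ≠ 0 := fun e => hY0 (e ▸ hy)
      have : y ≠ 1 := fun e => (Finset.mem_erase.mp hy).1 e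
      omega
    · simp only [U, h1, if_true, chg, hcX, hcY, hce]
      push_cast
      omega
    · simp only [U, h1, if_true, enn]
      omega
  · have hY2 : ∀ y ∈ q.2, 2 ≤ y := by
      intro y hy
      have : y ≠ 0 := fun e => h0 (e ▸ hy)
      have : y ≠ 1 := fun e => h1 (e ▸ hy)
      omega
    have hcY : (q.2.image (· - 1)).card = q.2.card := card_image_sub _ h0
    have hsY := sum_image_sub _ h0
    have hcX := card_image_add q.1
    have hsX := sum_image_add q.1
    have h0X : 0 ∉ q.1.image (· + 1) := zero_not_mem_image_add q.1
    refine ⟨?_, ?_, ?_⟩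
    · simp only [U, h1, if_false]
      intro hmem
      obtain ⟨y, hy, hy0⟩ := Finset.mem_image.mp hmem
      have := hY2 y hy
      omega
    · simp only [U, h1, if_false, chg, Finset.card_insert_of_notMem h0X, hcX, hcY]
      push_cast
      omega
    · simp only [U, h1, if_false, enn, Finset.sum_insert h0X, id_eq]
      omega

lemma Dn_cond {k W : ℤ} {q : Finset ℕ × Finset ℕ} (h : Cond k W q) :
    Cond (k-1) (W-k+1) (Dn q) := by
  obtain ⟨h0, hc, he⟩ := h
  simp only [chg, enn] at hc he
  by_cases h1 : 0 ∈ q.1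
  · have hX0 : 0 ∉ q.1.erase 0 := Finset.notMem_erase 0 q.1
    have hce : (q.1.erase 0).card = q.1.card - 1 := Finset.card_erase_of_mem h1
    have hse : (∑ x ∈ q.1.erase 0, x) = ∑ x ∈ q.1, x := by
      have := Finset.sum_erase_add q.1 (fun x => x) h1
      simpa using this
    have hcX : ((q.1.erase 0).image (· - 1)).card = (q.1.erase 0).card :=
      card_image_sub _ hX0
    have hsX := sum_image_sub _ hX0
    have hcY := card_image_add q.2
    have hsY := sum_image_add q.2
    have hcard1 : 1 ≤ q.1.card := Finset.card_pos.mpr ⟨0, h1⟩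
    refine ⟨?_, ?_, ?_⟩
    · simp only [Dn, h1, if_true]
      intro hmem
      obtain ⟨y, hy, hy0⟩ := Finset.mem_image.mp hmem
      have : y ≠ 0 := fun e => h0 (e ▸ hy)
      omega
    · simp only [Dn, h1, if_true, chg, hcX, hcY, hce]
      push_cast
      omega
    · simp only [Dn, h1, if_true, enn]
      omega
  · have hcX : (q.1.image (· - 1)).card = q.1.card := card_image_sub _ h1
    have hsX := sum_image_sub _ h1
    have hcY := card_image_add q.2
    have hsY := sum_image_add q.2
    have h1Y : 1 ∉ q.2.image (· + 1) := by
      intro hmem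
      obtain ⟨y, hy, hy0⟩ := Finset.mem_image.mp hmem
      have : y = 0 := by omega
      exact h0 (this ▸ hy)
    refine ⟨?_, ?_, ?_⟩
    · simp only [Dn, h1, if_false]
      intro hmem
      rcases Finset.mem_insert.mp hmem with h' | h'
      · exact absurd h' (by omega)
      · obtain ⟨y, hy, hy0⟩ := Finset.mem_image.mp h'
        omega
    · simp only [Dn, h1, if_false, chg, Finset.card_insert_of_notMem h1Y, hcX, hcY]
      push_cast
      omega
    · simp only [Dn, h1, if_false, enn, Finset.sum_insert h1Y, id_eq]
      omega

lemma Dn_U {q : Finset ℕ × Finset ℕ} (h0 : 0 ∉ q.2) : Dn (U q) = q := by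
  by_cases h1 : 1 ∈ q.2
  · have hY0 : 0 ∉ q.2.erase 1 := fun hmem => h0 (Finset.mem_of_mem_erase hmem)
    have h0X : 0 ∉ (q.1.image (· + 1)) := zero_not_mem_image_add q.1
    simp only [U, h1, if_true, Dn]
    rw [if_neg h0X]
    refine Prod.ext ?_ ?_
    · exact image_add_sub q.1
    · show insert 1 (((q.2.erase 1).image (· - 1)).image (· + 1)) = q.2
      rw [image_sub_add _ hY0, Finset.insert_erase h1]
  · have h0X : 0 ∈ insert 0 (q.1.image (· + 1)) := Finset.mem_insert_self 0 _
    simp only [U, h1, if_false, Dn]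
    rw [if_pos h0X]
    refine Prod.ext ?_ ?_
    · show ((insert 0 (q.1.image (· + 1))).erase 0).image (· - 1) = q.1
      rw [Finset.erase_insert (zero_not_mem_image_add q.1), image_add_sub]
    · show ((q.2.image (· - 1)).image (· + 1)) = q.2
      exact image_sub_add _ h0

lemma U_Dn {q : Finset ℕ × Finset ℕ} (h0 : 0 ∉ q.2) : U (Dn q) = q := by
  by_cases h1 : 0 ∈ q.1
  · have h1Y : 1 ∉ q.2.image (· + 1) := by
      intro hmem
      obtain ⟨y, hy, hy0⟩ := Finset.mem_image.mp hmem
      have : y = 0 := by omega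
      exact h0 (this ▸ hy)
    simp only [Dn, h1, if_true, U]
    rw [if_neg h1Y]
    refine Prod.ext ?_ ?_
    · show insert 0 (((q.1.erase 0).image (· - 1)).image (· + 1)) = q.1
      rw [image_sub_add _ (Finset.notMem_erase 0 q.1), Finset.insert_erase h1]
    · exact image_add_sub q.2
  · have h1Y : 1 ∈ insert 1 (q.2.image (· + 1)) := Finset.mem_insert_self 1 _
    simp only [Dn, h1, if_false, U]
    rw [if_pos h1Y]
    refine Prod.ext ?_ ?_
    · exact image_sub_add _ h1
    · show ((insert 1 (q.2.image (· + 1))).erase 1).image (· - 1) = q.2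
      rw [Finset.erase_insert (by
        intro hmem
        obtain ⟨y, hy, hy0⟩ := Finset.mem_image.mp hmem
        have : y = 0 := by omega
        exact h0 (this ▸ hy)), image_add_sub]

lemma card_step (k W : ℤ) : (CF k W).card = (CF (k+1) (W+k)).card := by
  apply Finset.card_bij' (fun q _ => U q) (fun q _ => Dn q)
  · intro q hq
    exact mem_CF.mpr (U_cond (mem_CF.mp hq))
  · intro q hq
    have h := Dn_cond (mem_CF.mp hq)
    have e1 : k + 1 - 1 = k := by ring
    have e2 : W + k - (k+1) + 1 = W := by ring
    rw [e1, e2] at h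
    exact mem_CF.mpr h
  · intro q hq
    exact Dn_U (mem_CF.mp hq).1
  · intro q hq
    exact U_Dn (mem_CF.mp hq).1

def gP (m : ℤ) : ℕ := (CF 0 m).card

def w0 (k : ℤ) : ℤ := k * (k - 1) / 2

lemma w0_mul (k : ℤ) : 2 * w0 k = k * (k - 1) := by
  have h := Int.even_mul_succ_self (k - 1)
  rw [show (k - 1) * (k - 1 + 1) = k * (k - 1) by ring] at h
  obtain ⟨r, hr⟩ := h
  unfold w0
  omega

lemma w0_nonneg (k : ℤ) : 0 ≤ w0 k := by
  have h := w0_mul k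
  have : 0 ≤ k * (k - 1) := by
    rcases le_or_gt 1 k with hk | hk
    · exact mul_nonneg (by omega) (by omega)
    · have e : k * (k - 1) = (-k) * (1 - k) := by ring
      rw [e]
      exact mul_nonneg (by omega) (by omega)
  omega

lemma gP_neg {m : ℤ} (h : m < 0) : gP m = 0 := by
  rw [gP, Finset.card_eq_zero, Finset.eq_empty_iff_forall_notMem]
  intro q hq
  have he := (mem_CF.mp hq).2.2
  simp only [enn] at he
  omega

lemma cardCF : ∀ (k W : ℤ), (CF k W).card = gP (W - w0 k) := by
  intro k
  induction k using Int.induction_on with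
  | zero =>
    intro W
    have : w0 0 = 0 := by have := w0_mul 0; omega
    rw [this]
    simp [gP]
  | succ k ih =>
    intro W
    have hs := card_step (k : ℤ) (W - k)
    rw [show (W : ℤ) - k + k = W by ring] at hs
    rw [← hs, ih (W - k)]
    congr 1
    have e1 := w0_mul (k : ℤ)
    have e2 := w0_mul ((k : ℤ) + 1)
    have e3 : ((k : ℤ) + 1) * ((k : ℤ) + 1 - 1) = (k : ℤ) * ((k : ℤ) - 1) + 2 * k := by ring
    rw [e3] at e2
    linarith
  | pred k ih =>
    intro W
    have hs := card_step (-(k : ℤ) - 1) W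
    rw [show (-(k : ℤ) - 1) + 1 = -(k : ℤ) by ring] at hs
    rw [hs, ih (W + (-(k : ℤ) - 1))]
    congr 1
    have e1 := w0_mul (-(k : ℤ))
    have e2 := w0_mul (-(k : ℤ) - 1)
    have e3 : (-(k : ℤ) - 1) * (-(k : ℤ) - 1 - 1) = (-(k : ℤ)) * (-(k : ℤ) - 1) + 2 * k + 2 := by
      ring
    rw [e3] at e2
    linarith

-- Part B

lemma card_le_sum' {s : Finset ℕ} (h : 0 ∉ s) : s.card ≤ ∑ x ∈ s, x := by
  calc s.card = ∑ _x ∈ s, 1 := by simp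
  _ ≤ ∑ x ∈ s, x := Finset.sum_le_sum (fun x hx => by
      have : x ≠ 0 := fun e => h (e ▸ hx)
      omega)

lemma card_le_sum_add_one (s : Finset ℕ) : s.card ≤ (∑ x ∈ s, x) + 1 := by
  have h1 := card_le_sum' (Finset.notMem_erase 0 s)
  have h2 : s.card ≤ (s.erase 0).card + 1 := by
    rcases Finset.decidableMem 0 s with h | h
    · rw [Finset.erase_eq_of_notMem h]; omega
    · rw [Finset.card_erase_of_mem h]
      have := Finset.card_pos.mpr ⟨0, h⟩
      omega
  have h3 : ∑ x ∈ s.erase 0, x ≤ ∑ x ∈ s, x :=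
    Finset.sum_le_sum_of_subset (Finset.erase_subset 0 s)
  omega

def QCond (N : ℕ) (q : (Finset ℕ × Finset ℕ) × (Finset ℕ × Finset ℕ)) : Prop :=
  0 ∉ q.1.2 ∧ 0 ∉ q.2.2 ∧ 10 * (enn q.1 + enn q.2) + chg q.1 + 3 * chg q.2 = N

instance (N : ℕ) (q : (Finset ℕ × Finset ℕ) × (Finset ℕ × Finset ℕ)) :
    Decidable (QCond N q) := by unfold QCond; infer_instance

def QF (N : ℕ) : Finset ((Finset ℕ × Finset ℕ) × (Finset ℕ × Finset ℕ)) :=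
  ((((range (N+1)).powerset ×ˢ (range (N+1)).powerset)) ×ˢ
    (((range (N+1)).powerset ×ˢ (range (N+1)).powerset))).filter (QCond N)

lemma mem_QF {N : ℕ} {q : (Finset ℕ × Finset ℕ) × (Finset ℕ × Finset ℕ)} :
    q ∈ QF N ↔ QCond N q := by
  unfold QF
  rw [Finset.mem_filter, Finset.mem_product, Finset.mem_product, Finset.mem_product]
  simp only [Finset.mem_powerset]
  constructor
  · exact fun h => h.2
  · intro h
    obtain ⟨h1, h2, he⟩ := h
    simp only [enn, chg] at he
    have hd1 := card_le_sum' h1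
    have hd3 := card_le_sum' h2
    refine ⟨⟨⟨?_, ?_⟩, ?_, ?_⟩, ⟨h1, h2, he⟩⟩ <;> intro x hx <;> rw [Finset.mem_range] <;>
      have h5 := elem_le_sum hx <;> omega

def pars (q : (Finset ℕ × Finset ℕ) × (Finset ℕ × Finset ℕ)) : ℤ × ℤ × ℤ × ℤ :=
  (chg q.1, enn q.1, chg q.2, enn q.2)

noncomputable def IN (N : ℕ) : Finset (ℤ × ℤ × ℤ × ℤ) :=
  ((Finset.Icc (-(N:ℤ)-1) ((N:ℤ)+1)) ×ˢ (Finset.Icc (0:ℤ) (N:ℤ)) ×ˢ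
    (Finset.Icc (-(N:ℤ)-1) ((N:ℤ)+1)) ×ˢ (Finset.Icc (0:ℤ) (N:ℤ))).filter
    (fun d => 10 * (d.2.1 + d.2.2.2) + d.1 + 3 * d.2.2.1 = N)

lemma pars_mem_IN {N : ℕ} {q : (Finset ℕ × Finset ℕ) × (Finset ℕ × Finset ℕ)}
    (h : q ∈ QF N) : pars q ∈ IN N := by
  obtain ⟨h1, h2, he⟩ := mem_QF.mp h
  unfold IN pars
  rw [Finset.mem_filter, Finset.mem_product, Finset.mem_product, Finset.mem_product]
  simp only [Finset.mem_Icc, enn, chg] at he ⊢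
  have hd1 := card_le_sum' h1
  have hd3 := card_le_sum' h2
  have hc1 := card_le_sum_add_one q.1.1
  have hc3 := card_le_sum_add_one q.2.1
  refine ⟨⟨⟨?_, ?_⟩, ⟨?_, ?_⟩, ⟨?_, ?_⟩, ?_, ?_⟩, ?_⟩ <;> omega

lemma fiber_eq {N : ℕ} {d : ℤ × ℤ × ℤ × ℤ} (hd : d ∈ IN N) :
    (QF N).filter (fun q => pars q = d) = CF d.1 d.2.1 ×ˢ CF d.2.2.1 d.2.2.2 := by
  have heq : 10 * (d.2.1 + d.2.2.2) + d.1 + 3 * d.2.2.1 = N :=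
    (Finset.mem_filter.mp hd).2
  ext q
  rw [Finset.mem_filter, Finset.mem_product, mem_QF, mem_CF, mem_CF]
  constructor
  · rintro ⟨⟨h1, h2, he⟩, hp⟩
    simp only [pars, Prod.ext_iff] at hp
    obtain ⟨e1, e2, e3, e4⟩ := hp
    exact ⟨⟨h1, e1, e2⟩, ⟨h2, e3, e4⟩⟩
  · rintro ⟨⟨h1, e1, e2⟩, ⟨h2, e3, e4⟩⟩
    refine ⟨⟨h1, h2, ?_⟩, ?_⟩
    · rw [e1, e2, e3, e4]; omega
    · simp only [pars, Prod.ext_iff]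
      exact ⟨e1, e2, e3, e4⟩

lemma card_QF (N : ℕ) :
    (QF N).card = ∑ d ∈ IN N, gP (d.2.1 - w0 d.1) * gP (d.2.2.2 - w0 d.2.2.1) := by
  rw [Finset.card_eq_sum_card_fiberwise (fun q hq => pars_mem_IN hq)]
  apply Finset.sum_congr rfl
  intro d hd
  rw [fiber_eq hd, Finset.card_product, cardCF, cardCF]

-- Part C

def SS (N : ℕ) : Finset (Finset ℕ) :=
  (range (N+1)).powerset.filter (fun A => (∀ x ∈ A, ¬ 2 ∣ x ∧ ¬ 5 ∣ x) ∧ ∑ x ∈ A, x = N)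

lemma mem_SS {N : ℕ} {A : Finset ℕ} :
    A ∈ SS N ↔ (∀ x ∈ A, ¬ 2 ∣ x ∧ ¬ 5 ∣ x) ∧ ∑ x ∈ A, x = N := by
  unfold SS
  rw [Finset.mem_filter, Finset.mem_powerset]
  constructor
  · exact fun h => h.2
  · intro h
    refine ⟨?_, h⟩
    intro x hx
    rw [Finset.mem_range]
    have h1 := elem_le_sum hx
    omega

def sp (A : Finset ℕ) : (Finset ℕ × Finset ℕ) × (Finset ℕ × Finset ℕ) :=
  (((A.filter (fun x => x % 10 = 1)).image (fun x => x / 10),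
    (A.filter (fun x => x % 10 = 9)).image (fun x => (x + 1) / 10)),
   ((A.filter (fun x => x % 10 = 3)).image (fun x => x / 10),
    (A.filter (fun x => x % 10 = 7)).image (fun x => (x + 3) / 10)))

def jn (q : (Finset ℕ × Finset ℕ) × (Finset ℕ × Finset ℕ)) : Finset ℕ :=
  ((q.1.1.image (fun a => 10 * a + 1) ∪ q.1.2.image (fun b => 10 * b - 1)) ∪
    q.2.1.image (fun a => 10 * a + 3)) ∪ q.2.2.image (fun b => 10 * b - 3)

lemma shapeA_card {c : ℕ} {F : Finset ℕ} (hF : ∀ x ∈ F, x % 10 = c) :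
    (F.image (fun x => x / 10)).card = F.card := by
  apply Finset.card_image_of_injOn
  intro x hx y hy hxy
  have h1 := hF x hx
  have h2 := hF y hy
  have hxy' : x / 10 = y / 10 := hxy
  omega

lemma shapeA_sum {c : ℕ} {F : Finset ℕ} (hF : ∀ x ∈ F, x % 10 = c) :
    10 * (∑ a ∈ F.image (fun x => x / 10), a) + c * F.card = ∑ x ∈ F, x := by
  rw [Finset.sum_image (fun x hx y hy hxy => by
    have h1 := hF x hx
    have h2 := hF y hy
    have hxy' : x / 10 = y / 10 := hxy
    omega)]
  have e1 : ∑ x ∈ F, (10 * (x / 10) + c) = ∑ x ∈ F, x :=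
    Finset.sum_congr rfl (fun x hx => by have := hF x hx; omega)
  have e2 : ∑ x ∈ F, (10 * (x / 10) + c) = 10 * (∑ x ∈ F, x / 10) + c * F.card := by
    rw [Finset.sum_add_distrib, Finset.mul_sum, Finset.sum_const, smul_eq_mul, mul_comm]
  omega

lemma shapeB_card {c : ℕ} (hc : 0 < c ∧ c < 10) {F : Finset ℕ}
    (hF : ∀ x ∈ F, x % 10 = 10 - c) :
    (F.image (fun x => (x + c) / 10)).card = F.card := by
  apply Finset.card_image_of_injOn
  intro x hx y hy hxy
  have h1 := hF x hx
  have h2 := hF y hy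
  have hxy' : (x + c) / 10 = (y + c) / 10 := hxy
  omega

lemma shapeB_sum {c : ℕ} (hc : 0 < c ∧ c < 10) {F : Finset ℕ}
    (hF : ∀ x ∈ F, x % 10 = 10 - c) :
    10 * (∑ a ∈ F.image (fun x => (x + c) / 10), a) = (∑ x ∈ F, x) + c * F.card := by
  rw [Finset.sum_image (fun x hx y hy hxy => by
    have h1 := hF x hx
    have h2 := hF y hy
    have hxy' : (x + c) / 10 = (y + c) / 10 := hxy
    omega)]
  have e1 : ∑ x ∈ F, (10 * ((x + c) / 10)) = ∑ x ∈ F, (x + c) :=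
    Finset.sum_congr rfl (fun x hx => by have := hF x hx; omega)
  have e2 : ∑ x ∈ F, (x + c) = (∑ x ∈ F, x) + c * F.card := by
    rw [Finset.sum_add_distrib, Finset.sum_const, smul_eq_mul, mul_comm]
  have e3 : ∑ x ∈ F, (10 * ((x + c) / 10)) = 10 * ∑ x ∈ F, ((x + c) / 10) :=
    (Finset.mul_sum _ _ _).symm
  omega

lemma shapeB_zero {c : ℕ} (hc : 0 < c ∧ c < 10) {F : Finset ℕ}
    (hF : ∀ x ∈ F, x % 10 = 10 - c) :
    0 ∉ F.image (fun x => (x + c) / 10) := by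
  intro hmem
  obtain ⟨x, hx, hx0⟩ := Finset.mem_image.mp hmem
  have := hF x hx
  omega

lemma res_cases {A : Finset ℕ} (hA : ∀ x ∈ A, ¬ 2 ∣ x ∧ ¬ 5 ∣ x) :
    ∀ x ∈ A, x % 10 = 1 ∨ x % 10 = 3 ∨ x % 10 = 7 ∨ x % 10 = 9 := by
  intro x hx
  have := hA x hx
  omega

lemma disj_filters (A : Finset ℕ) {r s : ℕ} (h : r ≠ s) :
    Disjoint (A.filter (fun x => x % 10 = r)) (A.filter (fun x => x % 10 = s)) := by
  rw [Finset.disjoint_left]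
  intro a ha hb
  exact h (((Finset.mem_filter.mp ha).2).symm.trans (Finset.mem_filter.mp hb).2)

lemma union_filters {A : Finset ℕ} (hA : ∀ x ∈ A, ¬ 2 ∣ x ∧ ¬ 5 ∣ x) :
    ((A.filter (fun x => x % 10 = 1) ∪ A.filter (fun x => x % 10 = 9)) ∪
      A.filter (fun x => x % 10 = 3)) ∪ A.filter (fun x => x % 10 = 7) = A := by
  ext x
  simp only [Finset.mem_union, Finset.mem_filter]
  constructor
  · rintro (((⟨h, _⟩ | ⟨h, _⟩) | ⟨h, _⟩) | ⟨h, _⟩) <;> exact h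
  · intro hx
    rcases res_cases hA x hx with h | h | h | h <;> tauto

lemma sum_split {A : Finset ℕ} (hA : ∀ x ∈ A, ¬ 2 ∣ x ∧ ¬ 5 ∣ x) :
    ∑ x ∈ A.filter (fun x => x % 10 = 1), x + ∑ x ∈ A.filter (fun x => x % 10 = 9), x +
      ∑ x ∈ A.filter (fun x => x % 10 = 3), x + ∑ x ∈ A.filter (fun x => x % 10 = 7), x =
      ∑ x ∈ A, x := by
  have d19 := disj_filters A (show (1:ℕ) ≠ 9 by omega)
  have d13 := disj_filters A (show (1:ℕ) ≠ 3 by omega)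
  have d93 := disj_filters A (show (9:ℕ) ≠ 3 by omega)
  have d17 := disj_filters A (show (1:ℕ) ≠ 7 by omega)
  have d97 := disj_filters A (show (9:ℕ) ≠ 7 by omega)
  have d37 := disj_filters A (show (3:ℕ) ≠ 7 by omega)
  have h1 : Disjoint (A.filter (fun x => x % 10 = 1) ∪ A.filter (fun x => x % 10 = 9))
      (A.filter (fun x => x % 10 = 3)) := Finset.disjoint_union_left.mpr ⟨d13, d93⟩
  have h2 : Disjoint ((A.filter (fun x => x % 10 = 1) ∪ A.filter (fun x => x % 10 = 9)) ∪
      A.filter (fun x => x % 10 = 3)) (A.filter (fun x => x % 10 = 7)) :=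
    Finset.disjoint_union_left.mpr ⟨Finset.disjoint_union_left.mpr ⟨d17, d97⟩, d37⟩
  conv_rhs => rw [← union_filters hA]
  rw [Finset.sum_union h2, Finset.sum_union h1, Finset.sum_union d19]

lemma sp_mem {N : ℕ} {A : Finset ℕ} (h : A ∈ SS N) : sp A ∈ QF N := by
  obtain ⟨hA, hsum⟩ := mem_SS.mp h
  have hF1 : ∀ x ∈ A.filter (fun x => x % 10 = 1), x % 10 = 1 :=
    fun x hx => (Finset.mem_filter.mp hx).2
  have hF3 : ∀ x ∈ A.filter (fun x => x % 10 = 3), x % 10 = 3 :=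
    fun x hx => (Finset.mem_filter.mp hx).2
  have hF9 : ∀ x ∈ A.filter (fun x => x % 10 = 9), x % 10 = 10 - 1 :=
    fun x hx => by have := (Finset.mem_filter.mp hx).2; omega
  have hF7 : ∀ x ∈ A.filter (fun x => x % 10 = 7), x % 10 = 10 - 3 :=
    fun x hx => by have := (Finset.mem_filter.mp hx).2; omega
  have hc19 : (0:ℕ) < 1 ∧ (1:ℕ) < 10 := by omega
  have hc37 : (0:ℕ) < 3 ∧ (3:ℕ) < 10 := by omega
  have c1 := shapeA_card hF1
  have s1 := shapeA_sum hF1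
  have c3 := shapeA_card hF3
  have s3 := shapeA_sum hF3
  have c9 := shapeB_card hc19 hF9
  have s9 := shapeB_sum hc19 hF9
  have z9 := shapeB_zero hc19 hF9
  have c7 := shapeB_card hc37 hF7
  have s7 := shapeB_sum hc37 hF7
  have z7 := shapeB_zero hc37 hF7
  have hsp := sum_split hA
  refine mem_QF.mpr ⟨z9, z7, ?_⟩
  simp only [sp, enn, chg]
  omega

lemma jn_sp {N : ℕ} {A : Finset ℕ} (h : A ∈ SS N) : jn (sp A) = A := by
  obtain ⟨hA, _⟩ := mem_SS.mp h
  ext x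
  simp only [jn, sp, Finset.mem_union, Finset.mem_image, Finset.mem_filter]
  constructor
  · rintro (((⟨a, ⟨y, ⟨hy, hr⟩, hd⟩, he⟩ | ⟨a, ⟨y, ⟨hy, hr⟩, hd⟩, he⟩) |
      ⟨a, ⟨y, ⟨hy, hr⟩, hd⟩, he⟩) | ⟨a, ⟨y, ⟨hy, hr⟩, hd⟩, he⟩) <;>
    · have : x = y := by omega
      exact this ▸ hy
  · intro hx
    rcases res_cases hA x hx with h' | h' | h' | h'
    · exact Or.inl (Or.inl (Or.inl ⟨x / 10, ⟨x, ⟨hx, h'⟩, rfl⟩, by omega⟩))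
    · exact Or.inl (Or.inr ⟨x / 10, ⟨x, ⟨hx, h'⟩, rfl⟩, by omega⟩)
    · exact Or.inr ⟨(x + 3) / 10, ⟨x, ⟨hx, h'⟩, rfl⟩, by omega⟩
    · exact Or.inl (Or.inl (Or.inr ⟨(x + 1) / 10, ⟨x, ⟨hx, h'⟩, rfl⟩, by omega⟩))
-- Part C2

lemma encA_card (c : ℕ) (X : Finset ℕ) : (X.image (fun a => 10 * a + c)).card = X.card :=
  Finset.card_image_of_injective X (fun a b h => by omega)

lemma encA_sum (c : ℕ) (X : Finset ℕ) :
    ∑ x ∈ X.image (fun a => 10 * a + c), x = 10 * (∑ a ∈ X, a) + c * X.card := by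
  rw [Finset.sum_image (fun x _ y _ h => by omega)]
  rw [Finset.sum_add_distrib, Finset.sum_const, smul_eq_mul, mul_comm X.card c, Finset.mul_sum]

lemma encA_res {c : ℕ} (hc : c < 10) (X : Finset ℕ) :
    ∀ x ∈ X.image (fun a => 10 * a + c), x % 10 = c := by
  intro x hx
  obtain ⟨a, _, rfl⟩ := Finset.mem_image.mp hx
  omega

lemma encB_card {c : ℕ} (hc : 0 < c ∧ c < 10) {Y : Finset ℕ} (hY : 0 ∉ Y) :
    (Y.image (fun b => 10 * b - c)).card = Y.card := by
  apply Finset.card_image_of_injOn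
  intro x hx y hy hxy
  have hx0 : x ≠ 0 := fun e => hY (e ▸ hx)
  have hy0 : y ≠ 0 := fun e => hY (e ▸ hy)
  have hxy' : 10 * x - c = 10 * y - c := hxy
  omega

lemma encB_sum {c : ℕ} (hc : 0 < c ∧ c < 10) {Y : Finset ℕ} (hY : 0 ∉ Y) :
    (∑ x ∈ Y.image (fun b => 10 * b - c), x) + c * Y.card = 10 * ∑ b ∈ Y, b := by
  rw [Finset.sum_image (fun x hx y hy hxy => by
    have hx0 : x ≠ 0 := fun e => hY (e ▸ hx)
    have hy0 : y ≠ 0 := fun e => hY (e ▸ hy)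
    have hxy' : 10 * x - c = 10 * y - c := hxy
    omega)]
  have e1 : ∑ b ∈ Y, ((10 * b - c) + c) = ∑ b ∈ Y, 10 * b :=
    Finset.sum_congr rfl (fun b hb => by
      have hb0 : b ≠ 0 := fun e => hY (e ▸ hb)
      omega)
  have e2 : ∑ b ∈ Y, ((10 * b - c) + c) = (∑ b ∈ Y, (10 * b - c)) + c * Y.card := by
    rw [Finset.sum_add_distrib, Finset.sum_const, smul_eq_mul, mul_comm]
  have e3 : ∑ b ∈ Y, 10 * b = 10 * ∑ b ∈ Y, b := (Finset.mul_sum _ _ _).symm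
  omega

lemma encB_res {c : ℕ} (hc : 0 < c ∧ c < 10) {Y : Finset ℕ} (hY : 0 ∉ Y) :
    ∀ x ∈ Y.image (fun b => 10 * b - c), x % 10 = 10 - c := by
  intro x hx
  obtain ⟨b, hb, rfl⟩ := Finset.mem_image.mp hx
  have hb0 : b ≠ 0 := fun e => hY (e ▸ hb)
  omega

lemma disj_of_res {s t : Finset ℕ} {r r' : ℕ} (hs : ∀ x ∈ s, x % 10 = r)
    (ht : ∀ x ∈ t, x % 10 = r') (h : r ≠ r') : Disjoint s t := by
  rw [Finset.disjoint_left]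
  intro a ha hb
  exact h ((hs a ha).symm.trans (ht a hb))

lemma jn_sum {q : (Finset ℕ × Finset ℕ) × (Finset ℕ × Finset ℕ)}
    (h01 : 0 ∉ q.1.2) (h03 : 0 ∉ q.2.2) :
    ∑ x ∈ jn q, x = (∑ x ∈ q.1.1.image (fun a => 10 * a + 1), x) +
      (∑ x ∈ q.1.2.image (fun b => 10 * b - 1), x) +
      (∑ x ∈ q.2.1.image (fun a => 10 * a + 3), x) +
      (∑ x ∈ q.2.2.image (fun b => 10 * b - 3), x) := by
  have hc19 : (0:ℕ) < 1 ∧ (1:ℕ) < 10 := by omega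
  have hc37 : (0:ℕ) < 3 ∧ (3:ℕ) < 10 := by omega
  have r1 := encA_res (show (1:ℕ) < 10 by omega) q.1.1
  have r9 := encB_res hc19 h01
  have r3 := encA_res (show (3:ℕ) < 10 by omega) q.2.1
  have r7 := encB_res hc37 h03
  have d19 := disj_of_res r1 r9 (by omega)
  have d13 := disj_of_res r1 r3 (by omega)
  have d93 := disj_of_res r9 r3 (by omega)
  have d17 := disj_of_res r1 r7 (by omega)
  have d97 := disj_of_res r9 r7 (by omega)
  have d37 := disj_of_res r3 r7 (by omega)
  have h1 : Disjoint (q.1.1.image (fun a => 10 * a + 1) ∪ q.1.2.image (fun b => 10 * b - 1))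
      (q.2.1.image (fun a => 10 * a + 3)) := Finset.disjoint_union_left.mpr ⟨d13, d93⟩
  have h2 : Disjoint ((q.1.1.image (fun a => 10 * a + 1) ∪ q.1.2.image (fun b => 10 * b - 1)) ∪
      q.2.1.image (fun a => 10 * a + 3)) (q.2.2.image (fun b => 10 * b - 3)) :=
    Finset.disjoint_union_left.mpr ⟨Finset.disjoint_union_left.mpr ⟨d17, d97⟩, d37⟩
  rw [jn, Finset.sum_union h2, Finset.sum_union h1, Finset.sum_union d19]

lemma jn_mem {N : ℕ} {q : (Finset ℕ × Finset ℕ) × (Finset ℕ × Finset ℕ)}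
    (h : q ∈ QF N) : jn q ∈ SS N := by
  obtain ⟨h01, h03, he⟩ := mem_QF.mp h
  have hc19 : (0:ℕ) < 1 ∧ (1:ℕ) < 10 := by omega
  have hc37 : (0:ℕ) < 3 ∧ (3:ℕ) < 10 := by omega
  have r1 := encA_res (show (1:ℕ) < 10 by omega) q.1.1
  have r9 := encB_res hc19 h01
  have r3 := encA_res (show (3:ℕ) < 10 by omega) q.2.1
  have r7 := encB_res hc37 h03
  refine mem_SS.mpr ⟨?_, ?_⟩
  · intro x hx
    rw [jn] at hx
    rcases Finset.mem_union.mp hx with hx' | hx'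
    · rcases Finset.mem_union.mp hx' with hx'' | hx''
      · rcases Finset.mem_union.mp hx'' with hm | hm
        · have := r1 x hm; omega
        · have := r9 x hm; omega
      · have := r3 x hx''; omega
    · have := r7 x hx'; omega
  · have hs := jn_sum h01 h03
    have s1 := encA_sum 1 q.1.1
    have s9 := encB_sum hc19 h01
    have s3 := encA_sum 3 q.2.1
    have s7 := encB_sum hc37 h03
    have c1 := encA_card 1 q.1.1
    have c9 := encB_card hc19 h01
    have c3 := encA_card 3 q.2.1
    have c7 := encB_card hc37 h03
    simp only [enn, chg] at he
    omega

lemma image_decA {c : ℕ} (hc : c < 10) (X : Finset ℕ) :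
    (X.image (fun a => 10 * a + c)).image (fun x => x / 10) = X := by
  rw [Finset.image_image]
  rw [Finset.image_congr (g := id) (fun a _ => by simp; omega)]
  exact Finset.image_id

lemma image_decB {c : ℕ} (hc : 0 < c ∧ c < 10) {Y : Finset ℕ} (hY : 0 ∉ Y) :
    (Y.image (fun b => 10 * b - c)).image (fun x => (x + c) / 10) = Y := by
  rw [Finset.image_image]
  rw [Finset.image_congr (g := id) (fun b hb => by
    have hb0 : b ≠ 0 := fun e => hY (e ▸ hb)
    simp
    omega)]
  exact Finset.image_id

lemma sp_jn {N : ℕ} {q : (Finset ℕ × Finset ℕ) × (Finset ℕ × Finset ℕ)}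
    (h : q ∈ QF N) : sp (jn q) = q := by
  obtain ⟨h01, h03, _⟩ := mem_QF.mp h
  have hc19 : (0:ℕ) < 1 ∧ (1:ℕ) < 10 := by omega
  have hc37 : (0:ℕ) < 3 ∧ (3:ℕ) < 10 := by omega
  have r1 := encA_res (show (1:ℕ) < 10 by omega) q.1.1
  have r9 := encB_res hc19 h01
  have r3 := encA_res (show (3:ℕ) < 10 by omega) q.2.1
  have r7 := encB_res hc37 h03
  have hf : ∀ r : ℕ, (jn q).filter (fun x => x % 10 = r) =
      ((q.1.1.image (fun a => 10 * a + 1)).filter (fun x => x % 10 = r) ∪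
        (q.1.2.image (fun b => 10 * b - 1)).filter (fun x => x % 10 = r) ∪
        (q.2.1.image (fun a => 10 * a + 3)).filter (fun x => x % 10 = r)) ∪
        (q.2.2.image (fun b => 10 * b - 3)).filter (fun x => x % 10 = r) := by
    intro r
    rw [jn, Finset.filter_union, Finset.filter_union, Finset.filter_union]
  have hf1 : (jn q).filter (fun x => x % 10 = 1) = q.1.1.image (fun a => 10 * a + 1) := by
    rw [hf 1, Finset.filter_true_of_mem (fun x hx => r1 x hx),
      Finset.filter_false_of_mem (fun x hx => by have := r9 x hx; omega),
      Finset.filter_false_of_mem (fun x hx => by have := r3 x hx; omega),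
      Finset.filter_false_of_mem (fun x hx => by have := r7 x hx; omega)]
    simp
  have hf9 : (jn q).filter (fun x => x % 10 = 9) = q.1.2.image (fun b => 10 * b - 1) := by
    rw [hf 9, Finset.filter_true_of_mem (fun x hx => r9 x hx),
      Finset.filter_false_of_mem (fun x hx => by have := r1 x hx; omega),
      Finset.filter_false_of_mem (fun x hx => by have := r3 x hx; omega),
      Finset.filter_false_of_mem (fun x hx => by have := r7 x hx; omega)]
    simp
  have hf3 : (jn q).filter (fun x => x % 10 = 3) = q.2.1.image (fun a => 10 * a + 3) := by
    rw [hf 3, Finset.filter_true_of_mem (fun x hx => r3 x hx),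
      Finset.filter_false_of_mem (fun x hx => by have := r1 x hx; omega),
      Finset.filter_false_of_mem (fun x hx => by have := r9 x hx; omega),
      Finset.filter_false_of_mem (fun x hx => by have := r7 x hx; omega)]
    simp
  have hf7 : (jn q).filter (fun x => x % 10 = 7) = q.2.2.image (fun b => 10 * b - 3) := by
    rw [hf 7, Finset.filter_true_of_mem (fun x hx => r7 x hx),
      Finset.filter_false_of_mem (fun x hx => by have := r1 x hx; omega),
      Finset.filter_false_of_mem (fun x hx => by have := r9 x hx; omega),
      Finset.filter_false_of_mem (fun x hx => by have := r3 x hx; omega)]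
    simp
  show ((_, _), (_, _)) = q
  rw [show q = ((q.1.1, q.1.2), (q.2.1, q.2.2)) from rfl]
  simp only [sp, hf1, hf9, hf3, hf7]
  rw [image_decA (by omega), image_decB hc19 h01, image_decA (by omega), image_decB hc37 h03]

lemma card_SS_QF (N : ℕ) : (SS N).card = (QF N).card := by
  apply Finset.card_bij' (fun A _ => sp A) (fun q _ => jn q)
  · exact fun A hA => sp_mem hA
  · exact fun q hq => jn_mem hq
  · exact fun A hA => jn_sp hA
  · exact fun q hq => sp_jn hq

-- Part D

lemma ars_eq (N : ℕ) : ars 2 5 N = (SS N).card := by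
  rw [ars]
  have e : {p : N.Partition // p.parts.Nodup ∧ ∀ x ∈ p.parts, ¬ 2 ∣ x ∧ ¬ 5 ∣ x} ≃
      {A : Finset ℕ // A ∈ SS N} :=
    { toFun := fun p => ⟨⟨p.1.parts, p.2.1⟩, mem_SS.mpr ⟨fun x hx => p.2.2 x hx, by
        show (Multiset.map (fun x => x) p.1.parts).sum = N
        rw [Multiset.map_id']
        exact p.1.parts_sum⟩⟩
      invFun := fun A => ⟨⟨A.1.1, fun {i} hi => by
          have h2 := ((mem_SS.mp A.2).1 i hi).1
          omega, by
          have h2 := (mem_SS.mp A.2).2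
          have h3 : (Multiset.map (fun x => x) A.1.1).sum = N := h2
          rw [Multiset.map_id'] at h3
          exact h3⟩, A.1.2, fun x hx => (mem_SS.mp A.2).1 x hx⟩
      left_inv := fun p => Subtype.ext (Nat.Partition.ext rfl)
      right_inv := fun A => Subtype.ext rfl }
  rw [Nat.card_congr e, Nat.card_eq_fintype_card, Fintype.card_coe]

noncomputable def INp (N : ℕ) : Finset (ℤ × ℤ × ℤ × ℤ) :=
  (IN N).filter (fun d => 0 ≤ d.2.1 - w0 d.1 ∧ 0 ≤ d.2.2.2 - w0 d.2.2.1)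

lemma sum_INp (N : ℕ) :
    ∑ d ∈ IN N, gP (d.2.1 - w0 d.1) * gP (d.2.2.2 - w0 d.2.2.1) =
    ∑ d ∈ INp N, gP (d.2.1 - w0 d.1) * gP (d.2.2.2 - w0 d.2.2.1) := by
  refine (Finset.sum_subset (Finset.filter_subset _ _) ?_).symm
  intro d hd hnd
  simp only [INp, Finset.mem_filter] at hnd
  rcases not_and_or.mp (fun hcon => hnd ⟨hd, hcon⟩) with h' | h'
  · rw [gP_neg (by omega), zero_mul]
  · rw [gP_neg (m := d.2.2.2 - w0 d.2.2.1) (by omega), mul_zero]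

def sw (d : ℤ × ℤ × ℤ × ℤ) : ℤ × ℤ × ℤ × ℤ :=
  (d.1, w0 d.1 + (d.2.2.2 - w0 d.2.2.1), d.2.2.1, w0 d.2.2.1 + (d.2.1 - w0 d.1))

lemma sw_sw (d : ℤ × ℤ × ℤ × ℤ) : sw (sw d) = d := by
  show ((_ : ℤ), (_ : ℤ), (_ : ℤ), (_ : ℤ)) = d
  rw [show d = (d.1, d.2.1, d.2.2.1, d.2.2.2) from rfl]
  simp only [sw]
  refine Prod.ext rfl (Prod.ext ?_ (Prod.ext rfl ?_)) <;> dsimp only <;> ring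

lemma w0_parity (k : ℤ) : ∃ c t : ℤ, 2 * w0 k = 4 * t + 2 * c ∧ (k = 2 * c ∨ k = 2 * c + 1) := by
  rcases Int.even_or_odd k with ⟨c, hc⟩ | ⟨c, hc⟩
  · exact ⟨c, c * c - c, by rw [w0_mul, hc]; ring, Or.inl (by omega)⟩
  · exact ⟨c, c * c, by rw [w0_mul, hc]; ring, Or.inr (by omega)⟩

lemma no_fix {k1 k3 W1 W3 : ℤ} {n : ℕ} (hfix : w0 k1 + (W3 - w0 k3) = W1)
    (heq : 10 * (W1 + W3) + k1 + 3 * k3 = ((4 * n + 2 : ℕ) : ℤ)) : False := by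
  obtain ⟨c1, t1, h1, hk1⟩ := w0_parity k1
  obtain ⟨c3, t3, h3, hk3⟩ := w0_parity k3
  rcases hk1 with h | h <;> rcases hk3 with h' | h' <;> omega

lemma sw_mem {n : ℕ} {d : ℤ × ℤ × ℤ × ℤ} (hd : d ∈ INp (4 * n + 2)) :
    sw d ∈ INp (4 * n + 2) := by
  rw [INp, Finset.mem_filter, IN, Finset.mem_filter, Finset.mem_product,
    Finset.mem_product, Finset.mem_product] at hd ⊢
  simp only [Finset.mem_Icc] at hd ⊢
  obtain ⟨⟨⟨⟨hk1a, hk1b⟩, ⟨hW1a, hW1b⟩, ⟨hk3a, hk3b⟩, hW3a, hW3b⟩, heq⟩, hm1, hm3⟩ := hd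
  have u1 := w0_nonneg d.1
  have u3 := w0_nonneg d.2.2.1
  simp only [sw]
  refine ⟨⟨⟨⟨by omega, by omega⟩, ⟨by omega, by omega⟩, ⟨by omega, by omega⟩,
    by omega, by omega⟩, by push_cast at heq ⊢; omega⟩, by omega, by omega⟩

theorem main (n : ℕ) : ars 2 5 (4 * n + 2) % 2 = 0 := by
  set N := 4 * n + 2 with hN
  have h1 : ars 2 5 N = (QF N).card := (ars_eq N).trans (card_SS_QF N)
  suffices hz : ((QF N).card : ZMod 2) = 0 by
    rw [h1]
    have := (ZMod.natCast_eq_zero_iff ((QF N).card) 2).mp hz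
    omega
  rw [card_QF, sum_INp, Nat.cast_sum]
  refine Finset.sum_involution (fun d _ => sw d) ?_ ?_ (fun d hd => sw_mem hd)
    (fun d hd => sw_sw d)
  · intro d hd
    have e1 : (sw d).2.1 - w0 (sw d).1 = d.2.2.2 - w0 d.2.2.1 := by simp only [sw]; ring
    have e3 : (sw d).2.2.2 - w0 (sw d).2.2.1 = d.2.1 - w0 d.1 := by simp only [sw]; ring
    rw [e1, e3, mul_comm]
    exact CharTwo.add_self_eq_zero _
  · intro d hd _
    intro hcon
    have hfix : w0 d.1 + (d.2.2.2 - w0 d.2.2.1) = d.2.1 := by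
      have := congrArg (fun x : ℤ × ℤ × ℤ × ℤ => x.2.1) hcon
      simpa [sw] using this
    have heq : 10 * (d.2.1 + d.2.2.2) + d.1 + 3 * d.2.2.1 = ((4 * n + 2 : ℕ) : ℤ) := by
      rw [INp, Finset.mem_filter, IN, Finset.mem_filter] at hd
      exact hd.1.2
    refine no_fix (k1 := d.1) (k3 := d.2.2.1) (W1 := d.2.1) (W3 := d.2.2.2) (n := n) hfix ?_
    have hNe : ((N : ℕ) : ℤ) = 4 * (n : ℤ) + 2 := by rw [hN]; push_cast; ring
    push_cast at heq ⊢
    omega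

end A25

theorem a25_4n2_even (n : ℕ) : ars 2 5 (4*n+2) % 2 = 0 := A25.main n
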